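/- Let F ∈ S♯_d with d > 2, and let G, H be operators of the form T^♭S_k⋯T^♭S_1 (compositions of truncated duality operators and shifts), and let f_0, f_1 be twist functions with 0 ≤ lexp(f_0) ≤ 1/d and 0 ≤ lexp(f_1) ≤ 1/d such that G(f_0) and H(f_1) are well defined. If G(f_0) = H(f_1), then G = H as elements of the formal group 𝔊. -/

import Mathlib

open Complex MeasureTheory Filter Topology Asymptotics Finset

noncomputable section

/-- An element of the extended Selberg class `S♯`: a Dirichlet series, absolutely
convergent for `Re s > 1`, with meromorphic continuation `F` whose only possible pole
is at `s = 1` (of order `≤ m`), entire of finite order after multiplying by `(s-1)^m`,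
satisfying a Riemann-type functional equation. -/
structure ExtSelberg where
  a : ℕ → ℂ
  ha0 : a 0 = 0
  F : ℂ → ℂ
  m : ℕ
  Q : ℝ
  hQ : 0 < Q
  r : ℕ
  lam : Fin r → ℝ
  hlam : ∀ j, 0 < lam j
  mu : Fin r → ℂ
  hmu : ∀ j, 0 ≤ (mu j).re
  w : ℂ
  hw : ‖w‖ = 1
  hsum : ∀ σ : ℝ, 1 < σ → Summable fun n : ℕ => ‖a n‖ * (n : ℝ) ^ (-σ)
  hF : ∀ s : ℂ, 1 < s.re → F s = ∑' n : ℕ, a n * (n : ℂ) ^ (-s)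
  hcont : ∃ G : ℂ → ℂ, Differentiable ℂ G ∧
    (∃ C A : ℝ, ∀ s, ‖G s‖ ≤ C * Real.exp (‖s‖ ^ A)) ∧
    ∀ s, s ≠ 1 → G s = (s - 1) ^ m * F s
  hfe : ∀ s : ℂ,
    (∀ j, ∀ n : ℕ, (lam j : ℂ) * s + mu j ≠ -(n : ℂ)) →
    (∀ j, ∀ n : ℕ, (lam j : ℂ) * (1 - s) + (starRingEnd ℂ) (mu j) ≠ -(n : ℂ)) →
    s ≠ 1 → s ≠ 0 →
    (Q : ℂ) ^ s * (∏ j, Complex.Gamma ((lam j : ℂ) * s + mu j)) * F s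
      = w * (Q : ℂ) ^ (1 - s) *
        (∏ j, Complex.Gamma ((lam j : ℂ) * (1 - s) + (starRingEnd ℂ) (mu j))) *
        (starRingEnd ℂ) (F ((starRingEnd ℂ) (1 - s)))

/-- The degree `d = 2∑λⱼ`. -/
def ExtSelberg.degree (E : ExtSelberg) : ℝ := 2 * ∑ j, E.lam j

/-- The conductor `q_F = (2π)^d Q² ∏ λⱼ^{2λⱼ}`. -/
def ExtSelberg.conductor (E : ExtSelberg) : ℝ :=
  (2 * Real.pi) ^ E.degree * E.Q ^ 2 * ∏ j, E.lam j ^ (2 * E.lam j)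

/-- The internal shift `θ_F = (2/d) Im(∑ μⱼ)`. -/
def ExtSelberg.theta (E : ExtSelberg) : ℝ := (2 / E.degree) * (∑ j, E.mu j).im

/-- The exact order `m_F` of the pole of `F` at `s = 1` (`0` if `F` is entire). -/
def ExtSelberg.polarOrder (E : ExtSelberg) : ℕ :=
  sInf {k : ℕ | ∃ G : ℂ → ℂ, Differentiable ℂ G ∧ ∀ s, s ≠ 1 → G s = (s - 1) ^ k * E.F s}

/-- A (generalized) twist function `f(ξ) = ∑ ακ ξ^κ`, encoded as the finitely
supported family of its coefficients, indexed by the (real) exponents. -/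
abbrev TwistFun := ℝ →₀ ℝ

/-- All exponents are nonnegative. -/
def ValidT (f : TwistFun) : Prop := ∀ κ ∈ f.support, 0 ≤ κ

/-- The leading exponent `lexp(f) = κ₀` (junk value `0` for `f = 0`). -/
def lexpT (f : TwistFun) : ℝ :=
  if h : f.support.Nonempty then f.support.max' h else 0

/-- Evaluation `f(ξ) = ∑ ακ ξ^κ`. -/
def evalT (f : TwistFun) (ξ : ℝ) : ℝ := ∑ κ ∈ f.support, f κ * ξ ^ κ

/-- `e(x) = e^{2πix}`. -/
def e (x : ℝ) : ℂ := Complex.exp (2 * Real.pi * Complex.I * x)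

/-- The terms of the nonlinear twist `F(s;f) = ∑ a(n) n^{-s} e(-f(n))`. -/
def twistTerm (a : ℕ → ℂ) (f : TwistFun) (s : ℂ) (n : ℕ) : ℂ :=
  a n * (n : ℂ) ^ (-s) * e (-(evalT f n))

/-- The nonlinear twist `F(s;f) = ∑ a(n) n^{-s} e(-f(n))` (as a series). -/
def twistSeries (a : ℕ → ℂ) (f : TwistFun) (s : ℂ) : ℂ := ∑' n, twistTerm a f s n

/-- `Φ(z,ξ,𝛂) = z^{1/d} - 2π f(qz/ξ,𝛂)`. -/
def PhiT (d q : ℝ) (f : TwistFun) (z ξ : ℝ) : ℝ :=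
  z ^ (1 / d) - 2 * Real.pi * evalT f (q * z / ξ)

/-- `g = T^♭(f)` for `f` with positive leading coefficient: `g` is the (unique) twist
function with nonnegative exponents describing the asymptotic expansion, up to terms
tending to `0`, of `Φ(x₀(ξ),ξ,𝛂)/(2π)` where `x₀(ξ)` is the critical point of
`z ↦ Φ(z,ξ,𝛂)`. -/
def IsDualPos (d q : ℝ) (f g : TwistFun) : Prop :=
  ValidT g ∧
  ∃ x0 : ℝ → ℝ,
    (∀ᶠ ξ in atTop, 1 ≤ x0 ξ ∧ HasDerivAt (fun z => PhiT d q f z ξ) 0 (x0 ξ)) ∧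
    Tendsto (fun ξ => PhiT d q f (x0 ξ) ξ / (2 * Real.pi) - evalT g ξ) atTop (nhds 0)

/-- `g = T^♭(f)`, the truncated dual twist function: for a negative leading
coefficient it is defined by `f* = -(-f)*`. -/
def IsDual (d q : ℝ) (f g : TwistFun) : Prop :=
  (0 < f (lexpT f) ∧ IsDualPos d q f g) ∨ (f (lexpT f) < 0 ∧ IsDualPos d q (-f) (-g))

/-- A shift: `P ∈ ℤ[ξ]` with `deg P ≥ 1`, acting by `S(f) = f + P`. -/
def IsShiftPoly (P : TwistFun) : Prop :=
  P ≠ 0 ∧ (∀ κ ∈ P.support, ∃ n : ℕ, 1 ≤ n ∧ κ = (n : ℝ)) ∧ ∀ κ, ∃ z : ℤ, P κ = (z : ℝ)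

/-- `TwistRep d q f0 f L` holds when `f = G(f0)` for some well-defined operator
`G = T^♭Sₖ⋯T^♭S₁` (possibly composed with further trivial shifts), starting from a
base twist function `f0` with `0 ≤ lexp(f0) ≤ 1/d`, the list `L = [ℓ₁,…,ℓₖ]` recording
the leading exponents `ℓⱼ = lexp(SⱼT^♭⋯T^♭S₁(f0)) > 1/d` at each application of `T^♭`. -/
inductive TwistRep (d q : ℝ) : TwistFun → TwistFun → List ℝ → Prop
  | base (f0 : TwistFun) : ValidT f0 → lexpT f0 ≤ 1 / d → TwistRep d q f0 f0 []
  | shift (f0 f P : TwistFun) (L : List ℝ) : TwistRep d q f0 f L → IsShiftPoly P →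
      TwistRep d q f0 (f + P) L
  | dual (f0 f P g : TwistFun) (L : List ℝ) : TwistRep d q f0 f L → IsShiftPoly P →
      1 / d < lexpT (f + P) → IsDual d q (f + P) g → TwistRep d q f0 g (L ++ [lexpT (f + P)])

/-- `q = q_F (2πd)^{-d}`, the parameter entering `Φ`. -/
def qop (E : ExtSelberg) : ℝ := E.conductor * (2 * Real.pi * E.degree) ^ (-E.degree)

/-- The class `𝒜(F)` of twist functions obtained from some base `f0` by a chain of
shifts and truncated duality operators. -/
def InA (E : ExtSelberg) (f : TwistFun) : Prop :=
  ∃ f0 L, TwistRep E.degree (qop E) f0 f L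

/-- `F(s;f)` extends to an entire function. -/
def EntireTwist (E : ExtSelberg) (f : TwistFun) : Prop :=
  ∃ T : ℂ → ℂ, Differentiable ℂ T ∧ ∀ s, 1 < s.re → T s = twistSeries E.a f s

/-- `Spec*(F)`: the set of `α ∈ ℝ` for which the standard twist
`F(s,α) = ∑ a(n) n^{-s} e(-α n^{1/d})` is not entire. -/
def SpecStar (E : ExtSelberg) : Set ℝ :=
  {α | ¬ EntireTwist E (Finsupp.single (1 / E.degree) α)}

/-- `Spec(F)`: the positive part of `Spec*(F)`. -/
def Spec (E : ExtSelberg) : Set ℝ := {α | 0 < α ∧ α ∈ SpecStar E}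

/-- The subclass `𝒜₀(F) ⊆ 𝒜(F)`: chains starting from a base `f0(ξ) = α ξ^{1/d}` with
`α ∈ Spec*(F)`. -/
def InA0 (E : ExtSelberg) (f : TwistFun) : Prop :=
  ∃ α ∈ SpecStar E, ∃ L, TwistRep E.degree (qop E) (Finsupp.single (1 / E.degree) α) f L

/-- The subclass `𝒜₀₀(F) ⊆ 𝒜₀(F)`: chains starting from `f0 = 0` (that is, `α = 0`). -/
def InA00 (E : ExtSelberg) (f : TwistFun) : Prop :=
  (0 : ℝ) ∈ SpecStar E ∧
    ∃ L, TwistRep E.degree (qop E) (Finsupp.single (1 / E.degree) (0 : ℝ)) f L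

/-- `D(f) = ∏ⱼ (dℓⱼ - 1)` attached to a representation with exponent list `L`. -/
def Dprod (d : ℝ) (L : List ℝ) : ℝ := (L.map fun ℓ => d * ℓ - 1).prod

/-- The weight `ω(f)`: the minimal number of duality operators among all
representations of `f` in `𝒜(F)`. -/
def weightT (E : ExtSelberg) (f : TwistFun) : ℕ :=
  sInf {n | ∃ f0 L, TwistRep E.degree (qop E) f0 f L ∧ L.length = n}

/-- `Chain d q f0 [P₁,…,Pₖ] f` holds when `f = T^♭Sₖ⋯T^♭S₁(f0)`, with `Sⱼ` the shift
by the integral polynomial `Pⱼ`; this records the word `𝐓𝐒ₖ⋯𝐓𝐒₁` of the formal group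
`𝔊`, which (in its canonical reduced form) is determined by the list `[P₁,…,Pₖ]`. -/
inductive Chain (d q : ℝ) : TwistFun → List TwistFun → TwistFun → Prop
  | nil (f : TwistFun) : Chain d q f [] f
  | cons (f P g h : TwistFun) (L : List TwistFun) : IsShiftPoly P →
      IsDual d q (f + P) g → Chain d q g L h → Chain d q f (P :: L) h


namespace Fact2

/-! ### Basic lemmas on `TwistFun`, `lexpT`, `evalT` -/

lemma lexpT_mem {f : TwistFun} (hf : f ≠ 0) : lexpT f ∈ f.support := by
  have h : f.support.Nonempty := Finsupp.support_nonempty_iff.2 hf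
  rw [lexpT, dif_pos h]
  exact f.support.max'_mem h

lemma le_lexpT {f : TwistFun} {κ : ℝ} (h : κ ∈ f.support) : κ ≤ lexpT f := by
  have hne : f.support.Nonempty := ⟨κ, h⟩
  rw [lexpT, dif_pos hne]
  exact f.support.le_max' κ h

lemma lexpT_coeff_ne {f : TwistFun} (hf : f ≠ 0) : f (lexpT f) ≠ 0 :=
  Finsupp.mem_support_iff.1 (lexpT_mem hf)

lemma lexpT_neg (f : TwistFun) : lexpT (-f) = lexpT f := by
  simp [lexpT, Finsupp.support_neg]

lemma validT_neg {f : TwistFun} (hf : ValidT f) : ValidT (-f) := by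
  intro κ hκ
  exact hf κ (by simpa [Finsupp.support_neg] using hκ)

lemma evalT_zero_fun (t : ℝ) : evalT 0 t = 0 := by simp [evalT]

lemma evalT_eq_sum (f : TwistFun) (t : ℝ) :
    evalT f t = f.sum fun κ a => a * t ^ κ := by
  rfl

lemma evalT_sub (f g : TwistFun) (t : ℝ) :
    evalT (f - g) t = evalT f t - evalT g t := by
  rw [evalT_eq_sum, evalT_eq_sum, evalT_eq_sum]
  exact Finsupp.sum_sub_index (fun a b₁ b₂ => by ring)

lemma evalT_neg' (f : TwistFun) (t : ℝ) : evalT (-f) t = - evalT f t := by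
  have := evalT_sub 0 f t
  simpa [evalT_zero_fun] using this

/-! ### Master asymptotic lemmas for finite `rpow` sums -/

/-- Each term of a shifted sum tends to its leading coefficient contribution. -/
lemma tendsto_sum_shifted (S : Finset ℝ) (c : ℝ → ℝ) (τ : ℝ) (hle : ∀ κ ∈ S, κ ≤ τ)
    (hmem : τ ∈ S) :
    Tendsto (fun t : ℝ => ∑ κ ∈ S, c κ * t ^ (κ - τ)) atTop (𝓝 (c τ)) := by
  have h1 : Tendsto (fun t : ℝ => ∑ κ ∈ S, c κ * t ^ (κ - τ)) atTop
      (𝓝 (∑ κ ∈ S, if κ = τ then c κ else 0)) := by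
    refine tendsto_finset_sum S (fun κ hκ => ?_)
    by_cases h : κ = τ
    · subst h
      simp only [sub_self, Real.rpow_zero, mul_one, if_pos rfl]
      exact tendsto_const_nhds
    · simp only [if_neg h]
      have hlt : 0 < τ - κ := sub_pos.2 (lt_of_le_of_ne (hle κ hκ) h)
      have : Tendsto (fun t : ℝ => t ^ (κ - τ)) atTop (𝓝 0) := by
        have := tendsto_rpow_neg_atTop hlt
        simpa [neg_sub] using this
      simpa using this.const_mul (c κ)
  rwa [Finset.sum_ite_eq' S τ c, if_pos hmem] at h1

/-- Shifting the normalization exponent of a sum, valid for `t > 0`. -/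
lemma sum_shift (S : Finset ℝ) (c : ℝ → ℝ) (σ τ : ℝ) {t : ℝ} (ht : 0 < t) :
    ∑ κ ∈ S, c κ * t ^ (κ - σ) = (∑ κ ∈ S, c κ * t ^ (κ - τ)) * t ^ (τ - σ) := by
  rw [Finset.sum_mul]
  refine Finset.sum_congr rfl (fun κ _ => ?_)
  rw [mul_assoc, ← Real.rpow_add ht]
  ring_nf

end Fact2

namespace Fact2

/-- The function `h(t) = ∑ κ F_κ t^{κ-1/d}` controlling criticality. -/
def hsum (F : TwistFun) (d t : ℝ) : ℝ := ∑ κ ∈ F.support, (F κ * κ) * t ^ (κ - 1/d)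

/-- Its derivative. -/
def hsum' (F : TwistFun) (d t : ℝ) : ℝ :=
  ∑ κ ∈ F.support, (F κ * κ * (κ - 1/d)) * t ^ (κ - (1/d + 1))

/-- The critical level: `x` is a critical point of `Φ(·,ξ)` iff `h(qx/ξ) = Hc ξ`. -/
def Hc (d q ξ : ℝ) : ℝ := (1/d) / (2 * Real.pi * (q/ξ) ^ (1/d))

lemma Hc_pos {d q ξ : ℝ} (hd : 0 < d) (hq : 0 < q) (hξ : 0 < ξ) : 0 < Hc d q ξ := by
  have h1 : (0:ℝ) < (q/ξ) ^ (1/d) := Real.rpow_pos_of_pos (by positivity) _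
  have := Real.pi_pos
  rw [Hc]; positivity

lemma Hc_eq {d q ξ : ℝ} (hq : 0 < q) (hξ : 0 < ξ) :
    Hc d q ξ = ((1/d) / (2 * Real.pi * q ^ (1/d))) * ξ ^ (1/d) := by
  have h1 : (0:ℝ) < q ^ (1/d) := Real.rpow_pos_of_pos hq _
  have h2 : (0:ℝ) < ξ ^ (1/d) := Real.rpow_pos_of_pos hξ _
  have hπ := Real.pi_pos
  rw [Hc, Real.div_rpow hq.le hξ.le]
  field_simp

lemma hasDerivAt_hsum (F : TwistFun) (d : ℝ) {t : ℝ} (ht : 0 < t) :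
    HasDerivAt (fun s => hsum F d s) (hsum' F d t) t := by
  rw [hsum']
  have : (fun s => hsum F d s) = fun s => ∑ κ ∈ F.support, (F κ * κ) * s ^ (κ - 1/d) := rfl
  rw [this]
  refine HasDerivAt.fun_sum (fun κ _ => ?_)
  have h := Real.hasDerivAt_rpow_const (x := t) (p := κ - 1/d) (Or.inl ht.ne')
  have h2 := h.const_mul (F κ * κ)
  refine h2.congr_deriv (Eq.symm ?_)
  rw [show κ - (1/d + 1) = κ - 1/d - 1 by ring]
  ring

lemma hasDerivAt_phi (F : TwistFun) {d q ξ x : ℝ} (hq : 0 < q) (hξ : 0 < ξ) (hx : 0 < x) :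
    HasDerivAt (fun z => PhiT d q F z ξ)
      (x ^ (1/d - 1) * (1/d - 2 * Real.pi * (q/ξ) ^ (1/d) * hsum F d (q*x/ξ))) x := by
  have ht : 0 < q * x / ξ := by positivity
  have hqξ : 0 < q / ξ := by positivity
  have h1 : HasDerivAt (fun z : ℝ => z ^ (1/d)) ((1/d) * x ^ (1/d - 1)) x :=
    Real.hasDerivAt_rpow_const (Or.inl hx.ne')
  have hinner : HasDerivAt (fun z : ℝ => q * z / ξ) (q / ξ) x := by
    simpa using ((hasDerivAt_id x).const_mul q).div_const ξ
  have h2 : HasDerivAt (fun z : ℝ => evalT F (q * z / ξ))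
      (∑ κ ∈ F.support, F κ * (q / ξ * κ * (q*x/ξ) ^ (κ - 1))) x := by
    have : (fun z : ℝ => evalT F (q * z / ξ))
        = fun z : ℝ => ∑ κ ∈ F.support, F κ * (q * z / ξ) ^ κ := rfl
    rw [this]
    refine HasDerivAt.fun_sum (fun κ _ => ?_)
    have h3 := hinner.rpow_const (p := κ) (Or.inl ht.ne')
    have h4 := h3.const_mul (F κ)
    exact h4
  have h5 := h1.fun_sub (h2.const_mul (2 * Real.pi))
  have hphi : (fun z => PhiT d q F z ξ)
      = fun z : ℝ => z ^ (1/d) - 2 * Real.pi * evalT F (q * z / ξ) := rfl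
  rw [hphi]
  refine h5.congr_deriv (Eq.symm ?_)
  -- value identity
  rw [mul_sub, hsum, Finset.mul_sum, Finset.mul_sum, Finset.mul_sum]
  congr 1
  · ring
  · refine Finset.sum_congr rfl (fun κ _ => ?_)
    have e2 : (q*x/ξ) ^ (κ - 1) = (q*x/ξ) ^ (κ - 1/d) * (q*x/ξ) ^ (1/d - 1) := by
      rw [← Real.rpow_add ht]; ring_nf
    have e3 : (q*x/ξ) ^ (1/d - 1) = (q/ξ) ^ (1/d - 1) * x ^ (1/d - 1) := by
      rw [show q*x/ξ = (q/ξ) * x by ring, Real.mul_rpow hqξ.le hx.le]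
    have e4 : (q/ξ) ^ ((1:ℝ)) * (q/ξ) ^ (1/d - 1) = (q/ξ) ^ (1/d) := by
      rw [← Real.rpow_add hqξ]; ring_nf
    have key : q/ξ * κ * (q*x/ξ)^(κ-1) = (q/ξ)^(1/d) * κ * ((q*x/ξ)^(κ-1/d) * x^(1/d-1)) := by
      rw [e2, e3, ← e4, Real.rpow_one]; ring
    rw [key]; ring

end Fact2

namespace Fact2

/-! ### Factorizations and asymptotics -/

lemma evalT_factor (F : TwistFun) (τ : ℝ) {t : ℝ} (ht : 0 < t) :
    evalT F t = (∑ κ ∈ F.support, F κ * t ^ (κ - τ)) * t ^ τ := by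
  have h1 : evalT F t = ∑ κ ∈ F.support, F κ * t ^ (κ - (0:ℝ)) := by
    rw [evalT]
    exact Finset.sum_congr rfl (fun κ _ => by rw [sub_zero])
  rw [h1, sum_shift _ _ _ τ ht, sub_zero]

lemma hsum_factor (F : TwistFun) (d τ : ℝ) {t : ℝ} (ht : 0 < t) :
    hsum F d t = (∑ κ ∈ F.support, (F κ * κ) * t ^ (κ - τ)) * t ^ (τ - 1/d) := by
  rw [hsum, sum_shift _ _ _ τ ht]

lemma hsum'_factor (F : TwistFun) (d τ : ℝ) {t : ℝ} (ht : 0 < t) :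
    hsum' F d t = (∑ κ ∈ F.support, (F κ * κ * (κ - 1/d)) * t ^ (κ - τ)) * t ^ (τ - (1/d+1)) := by
  rw [hsum', sum_shift _ _ _ τ ht]

/-- Main eventual facts about `evalT`, `hsum`, `hsum'` for large `t`, for a twist
function with positive leading coefficient and leading exponent `n ≥ 1 > 1/d`. -/
lemma eventual_t_facts (F : TwistFun) {d : ℝ} (hd : 2 < d)
    (hn : 1 ≤ lexpT F) (hFn : 0 < F (lexpT F)) :
    ∀ᶠ t : ℝ in atTop, 0 < t ∧ 0 < evalT F t ∧
      (F (lexpT F) * lexpT F / 2) * t ^ (lexpT F - 1/d) ≤ hsum F d t ∧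
      0 < hsum' F d t ∧ evalT F t ≤ (F (lexpT F) + 1) * t ^ (lexpT F) := by
  set n := lexpT F with hn_def
  have hd0 : (0:ℝ) < d := by linarith
  have hmem : n ∈ F.support := Finsupp.mem_support_iff.2 hFn.ne'
  have hle : ∀ κ ∈ F.support, κ ≤ n := fun κ hκ => le_lexpT hκ
  have h1d : 1/d < 1 := by
    rw [div_lt_one hd0]; linarith
  have hnd : 0 < n - 1/d := by linarith
  have hRE : Tendsto (fun t : ℝ => ∑ κ ∈ F.support, F κ * t ^ (κ - n)) atTop (𝓝 (F n)) :=
    tendsto_sum_shifted _ _ n hle hmem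
  have hRh : Tendsto (fun t : ℝ => ∑ κ ∈ F.support, (F κ * κ) * t ^ (κ - n)) atTop
      (𝓝 (F n * n)) := tendsto_sum_shifted _ _ n hle hmem
  have hRh' : Tendsto (fun t : ℝ => ∑ κ ∈ F.support, (F κ * κ * (κ - 1/d)) * t ^ (κ - n)) atTop
      (𝓝 (F n * n * (n - 1/d))) := tendsto_sum_shifted _ _ n hle hmem
  have hnn : 0 < F n * n := by nlinarith
  have hnn' : 0 < F n * n * (n - 1/d) := by nlinarith
  have e1 : ∀ᶠ t : ℝ in atTop, 0 < ∑ κ ∈ F.support, F κ * t ^ (κ - n) :=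
    hRE.eventually (eventually_gt_nhds hFn)
  have e2 : ∀ᶠ t : ℝ in atTop, F n * n / 2 ≤ ∑ κ ∈ F.support, (F κ * κ) * t ^ (κ - n) :=
    hRh.eventually (eventually_ge_nhds (by linarith))
  have e3 : ∀ᶠ t : ℝ in atTop, 0 < ∑ κ ∈ F.support, (F κ * κ * (κ - 1/d)) * t ^ (κ - n) :=
    hRh'.eventually (eventually_gt_nhds hnn')
  have e4 : ∀ᶠ t : ℝ in atTop, (∑ κ ∈ F.support, F κ * t ^ (κ - n)) ≤ F n + 1 :=
    hRE.eventually (eventually_le_nhds (by linarith))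
  filter_upwards [e1, e2, e3, e4, eventually_gt_atTop 0] with t h1 h2 h3 h4 ht
  have htn : (0:ℝ) < t ^ (n : ℝ) := Real.rpow_pos_of_pos ht _
  have htn2 : (0:ℝ) < t ^ (n - 1/d) := Real.rpow_pos_of_pos ht _
  have htn3 : (0:ℝ) < t ^ (n - (1/d+1)) := Real.rpow_pos_of_pos ht _
  refine ⟨ht, ?_, ?_, ?_, ?_⟩
  · rw [evalT_factor F n ht]; positivity
  · rw [hsum_factor F d n ht]
    calc F n * n / 2 * t ^ (n - 1/d)
        ≤ (∑ κ ∈ F.support, (F κ * κ) * t ^ (κ - n)) * t ^ (n - 1/d) := by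
          exact mul_le_mul_of_nonneg_right h2 htn2.le
      _ = _ := rfl
  · rw [hsum'_factor F d n ht]; positivity
  · rw [evalT_factor F n ht]
    exact mul_le_mul_of_nonneg_right h4 htn.le

/-- Eventually (in `ξ`), `|h|` is smaller than the critical level `Hc ξ`
on the whole range `[q/ξ, T]`. -/
lemma hsum_small (F : TwistFun) {d q : ℝ} (hd : 2 < d) (hq : 0 < q) (hFv : ValidT F)
    (T : ℝ) (hT : 1 ≤ T) :
    ∀ᶠ ξ : ℝ in atTop, ∀ t : ℝ, q/ξ ≤ t → t ≤ T → |hsum F d t| < Hc d q ξ := by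
  have hd0 : (0:ℝ) < d := by linarith
  have hπ := Real.pi_pos
  set c₂ : ℝ := (1/d) / (2 * Real.pi * q ^ (1/d)) with hc₂def
  have hc₂ : 0 < c₂ := by
    have : (0:ℝ) < q ^ (1/d) := Real.rpow_pos_of_pos hq _
    rw [hc₂def]; positivity
  set M : ℝ → ℝ := fun ξ => ∑ κ ∈ F.support,
    |F κ * κ| * (T ^ (κ - 1/d) + (q/ξ) ^ (κ - 1/d)) with hMdef
  -- M ξ * ξ^(-1/d) → 0
  have hM0 : Tendsto (fun ξ => M ξ * ξ ^ (-(1/d))) atTop (𝓝 0) := by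
    have heq : ∀ᶠ ξ : ℝ in atTop, M ξ * ξ ^ (-(1/d)) =
        ∑ κ ∈ F.support,
          (|F κ * κ| * T ^ (κ - 1/d) * ξ ^ (-(1/d)) + |F κ * κ| * ((q/ξ) ^ (κ - 1/d) * ξ ^ (-(1/d)))) := by
      filter_upwards [eventually_gt_atTop 0] with ξ hξ
      rw [hMdef]
      simp only [Finset.sum_mul]
      exact Finset.sum_congr rfl (fun κ _ => by ring)
    rw [tendsto_congr' heq]
    have hzero : (0:ℝ) = ∑ κ ∈ F.support, ((0:ℝ) + 0) := by simp
    rw [hzero]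
    refine tendsto_finset_sum _ (fun κ hκ => Tendsto.add ?_ ?_)
    · simpa using (tendsto_rpow_neg_atTop (by positivity : (0:ℝ) < 1/d)).const_mul
        (|F κ * κ| * T ^ (κ - 1/d))
    · by_cases hcz : F κ * κ = 0
      · simp [hcz]
      · have hκ0 : 0 ≤ κ := hFv κ hκ
        have hκpos : 0 < κ := by
          rcases hκ0.lt_or_eq with h | h
          · exact h
          · exfalso; exact hcz (by rw [← h, mul_zero])
        have heq2 : ∀ᶠ ξ : ℝ in atTop,
            |F κ * κ| * ((q/ξ) ^ (κ - 1/d) * ξ ^ (-(1/d)))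
              = |F κ * κ| * q ^ (κ - 1/d) * ξ ^ (-κ) := by
          filter_upwards [eventually_gt_atTop 0] with ξ hξ
          have e1 : (q/ξ) ^ (κ - 1/d) = q ^ (κ - 1/d) * ξ ^ (-(κ - 1/d)) := by
            rw [Real.div_rpow hq.le hξ.le, Real.rpow_neg hξ.le, div_eq_mul_inv]
          rw [e1, mul_assoc, ← Real.rpow_add hξ, show -(κ - 1/d) + -(1/d) = -κ by ring,
            ← mul_assoc]
        rw [tendsto_congr' heq2]
        simpa using (tendsto_rpow_neg_atTop hκpos).const_mul (|F κ * κ| * q ^ (κ - 1/d))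
  have hev : ∀ᶠ ξ : ℝ in atTop, M ξ * ξ ^ (-(1/d)) < c₂ :=
    hM0.eventually (eventually_lt_nhds hc₂)
  filter_upwards [hev, eventually_gt_atTop 0] with ξ hMξ hξ t hqt htT
  have hqξ : 0 < q / ξ := by positivity
  have ht : 0 < t := lt_of_lt_of_le hqξ hqt
  -- |hsum F d t| ≤ M ξ
  have hbound : |hsum F d t| ≤ M ξ := by
    rw [hsum, hMdef]
    refine (Finset.abs_sum_le_sum_abs _ _).trans ?_
    refine Finset.sum_le_sum (fun κ _ => ?_)
    rw [abs_mul, _root_.abs_of_nonneg (Real.rpow_nonneg ht.le _)]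
    refine mul_le_mul_of_nonneg_left ?_ (abs_nonneg _)
    rcases le_or_gt 0 (κ - 1/d) with hsgn | hsgn
    · refine le_add_of_le_of_nonneg ?_ (Real.rpow_nonneg hqξ.le _)
      exact Real.rpow_le_rpow ht.le htT hsgn
    · refine le_add_of_nonneg_of_le (Real.rpow_nonneg (by linarith : (0:ℝ) ≤ T) _) ?_
      exact Real.rpow_le_rpow_of_nonpos hqξ hqt hsgn.le
  have hξd : (0:ℝ) < ξ ^ (1/d) := Real.rpow_pos_of_pos hξ _
  have hMlt : M ξ < c₂ * ξ ^ (1/d) := by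
    have h1 : M ξ = M ξ * ξ ^ (-(1/d)) * ξ ^ (1/d) := by
      rw [mul_assoc, ← Real.rpow_add hξ]
      simp
    rw [h1]
    exact mul_lt_mul_of_pos_right hMξ hξd
  calc |hsum F d t| ≤ M ξ := hbound
    _ < c₂ * ξ ^ (1/d) := hMlt
    _ = Hc d q ξ := (Hc_eq hq hξ).symm

/-- Criticality in terms of `hsum`. -/
lemma crit_hsum_eq (F : TwistFun) {d q ξ x : ℝ} (hd : 0 < d) (hq : 0 < q) (hξ : 0 < ξ)
    (hx : 0 < x) (hder : HasDerivAt (fun z => PhiT d q F z ξ) 0 x) :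
    hsum F d (q*x/ξ) = Hc d q ξ := by
  have h := (hasDerivAt_phi F hq hξ hx).unique hder
  have hxp : (0:ℝ) < x ^ (1/d - 1) := Real.rpow_pos_of_pos hx _
  have hπ := Real.pi_pos
  have hc : (0:ℝ) < 2 * Real.pi * (q/ξ) ^ (1/d) := by
    have : (0:ℝ) < (q/ξ) ^ (1/d) := Real.rpow_pos_of_pos (by positivity) _
    positivity
  have h2 : 1/d - 2 * Real.pi * (q/ξ) ^ (1/d) * hsum F d (q*x/ξ) = 0 :=
    (mul_eq_zero.1 h).resolve_left hxp.ne'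
  have h3 : 2 * Real.pi * (q/ξ) ^ (1/d) * hsum F d (q*x/ξ) = 1/d := by linarith
  rw [Hc, eq_div_iff hc.ne']
  linarith [h3, mul_comm (2 * Real.pi * (q/ξ) ^ (1/d)) (hsum F d (q*x/ξ))]

/-- Sign of the derivative of `Φ(·,ξ)`. -/
lemma dphi_nonneg (F : TwistFun) {d q ξ x : ℝ} (hd : 0 < d) (hq : 0 < q) (hξ : 0 < ξ)
    (hx : 0 < x) (hh : hsum F d (q*x/ξ) ≤ Hc d q ξ) :
    0 ≤ x ^ (1/d - 1) * (1/d - 2 * Real.pi * (q/ξ) ^ (1/d) * hsum F d (q*x/ξ)) := by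
  have hxp : (0:ℝ) ≤ x ^ (1/d - 1) := (Real.rpow_pos_of_pos hx _).le
  have hπ := Real.pi_pos
  have hc : (0:ℝ) < 2 * Real.pi * (q/ξ) ^ (1/d) := by
    have : (0:ℝ) < (q/ξ) ^ (1/d) := Real.rpow_pos_of_pos (by positivity) _
    positivity
  refine mul_nonneg hxp ?_
  rw [Hc, le_div_iff₀ hc] at hh
  nlinarith [hh]

lemma dphi_nonpos (F : TwistFun) {d q ξ x : ℝ} (hd : 0 < d) (hq : 0 < q) (hξ : 0 < ξ)
    (hx : 0 < x) (hh : Hc d q ξ ≤ hsum F d (q*x/ξ)) :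
    x ^ (1/d - 1) * (1/d - 2 * Real.pi * (q/ξ) ^ (1/d) * hsum F d (q*x/ξ)) ≤ 0 := by
  have hxp : (0:ℝ) ≤ x ^ (1/d - 1) := (Real.rpow_pos_of_pos hx _).le
  have hπ := Real.pi_pos
  have hc : (0:ℝ) < 2 * Real.pi * (q/ξ) ^ (1/d) := by
    have : (0:ℝ) < (q/ξ) ^ (1/d) := Real.rpow_pos_of_pos (by positivity) _
    positivity
  refine mul_nonpos_of_nonneg_of_nonpos hxp ?_
  rw [Hc, div_le_iff₀ hc] at hh
  nlinarith [hh]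

end Fact2

namespace Fact2

section CritMain

variable {d q : ℝ} {F : TwistFun} {x0 : ℝ → ℝ}

/-- The rescaled critical point `t₀ = q x₀/ξ` tends to infinity. -/
lemma crit_t0_tendsto (hd : 2 < d) (hq : 0 < q) (hFv : ValidT F)
    (hx0 : ∀ᶠ ξ : ℝ in atTop, 1 ≤ x0 ξ ∧ HasDerivAt (fun z => PhiT d q F z ξ) 0 (x0 ξ)) :
    Tendsto (fun ξ => q * x0 ξ / ξ) atTop atTop := by
  rw [tendsto_atTop]
  intro b
  filter_upwards [hsum_small F hd hq hFv (max b 1) (le_max_right _ _), hx0,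
    eventually_gt_atTop 0] with ξ hsmall hx hξ
  have hx1 := hx.1
  have hcrit := crit_hsum_eq F (by linarith) hq hξ (by linarith) hx.2
  by_contra hcon
  push_neg at hcon
  have hqt : q/ξ ≤ q * x0 ξ / ξ := by
    apply (div_le_div_iff_of_pos_right hξ).2
    exact le_mul_of_one_le_right hq.le hx1
  have h1 := hsmall (q * x0 ξ / ξ) hqt (le_of_lt (lt_of_lt_of_le hcon (le_max_left b 1)))
  rw [hcrit] at h1
  linarith [le_abs_self (Hc d q ξ)]

/-- Eventually, the critical point is the global maximum of `Φ(·,ξ)` on `[1,∞)`. -/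
lemma crit_max (hd : 2 < d) (hq : 0 < q) (hFv : ValidT F)
    (hn : 1 ≤ lexpT F) (hFn : 0 < F (lexpT F))
    (hx0 : ∀ᶠ ξ : ℝ in atTop, 1 ≤ x0 ξ ∧ HasDerivAt (fun z => PhiT d q F z ξ) 0 (x0 ξ)) :
    ∀ᶠ ξ : ℝ in atTop, ∀ x : ℝ, 1 ≤ x → PhiT d q F x ξ ≤ PhiT d q F (x0 ξ) ξ := by
  obtain ⟨T₀', hT₀'⟩ := eventually_atTop.1 (eventual_t_facts F hd hn hFn)
  set T₀ := max T₀' 1 with hT₀def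
  have hT₀1 : (1:ℝ) ≤ T₀ := le_max_right _ _
  have hfacts : ∀ t, T₀ ≤ t → 0 < t ∧ 0 < evalT F t ∧
      (F (lexpT F) * lexpT F / 2) * t ^ (lexpT F - 1/d) ≤ hsum F d t ∧
      0 < hsum' F d t ∧ evalT F t ≤ (F (lexpT F) + 1) * t ^ (lexpT F) :=
    fun t ht => hT₀' t (le_trans (le_max_left _ _) ht)
  have hmono : StrictMonoOn (hsum F d) (Set.Ici T₀) := by
    apply strictMonoOn_of_deriv_pos (convex_Ici T₀ : Convex ℝ (Set.Ici T₀))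
    · intro t ht
      have htpos : (0:ℝ) < t := lt_of_lt_of_le one_pos (le_trans hT₀1 ht)
      exact (hasDerivAt_hsum F d htpos).continuousAt.continuousWithinAt
    · intro t ht
      rw [interior_Ici] at ht
      have htpos : (0:ℝ) < t := lt_of_lt_of_le one_pos (le_trans hT₀1 ht.le)
      rw [(hasDerivAt_hsum F d htpos).deriv]
      exact (hfacts t ht.le).2.2.2.1
  have htt := crit_t0_tendsto hd hq hFv hx0
  filter_upwards [hx0, eventually_gt_atTop 0, htt.eventually_ge_atTop T₀,
    hsum_small F hd hq hFv T₀ hT₀1] with ξ hx hξ ht0 hsmall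
  obtain ⟨hx1, hder⟩ := hx
  have hd0 : (0:ℝ) < d := by linarith
  have hx0pos : 0 < x0 ξ := by linarith
  have hcrit : hsum F d (q * x0 ξ / ξ) = Hc d q ξ := crit_hsum_eq F hd0 hq hξ hx0pos hder
  have hsign : ∀ y : ℝ, 1 ≤ y → y ≤ x0 ξ → hsum F d (q*y/ξ) ≤ Hc d q ξ := by
    intro y hy1 hyx
    have hty : q*y/ξ ≤ q * x0 ξ / ξ :=
      (div_le_div_iff_of_pos_right hξ).2 (mul_le_mul_of_nonneg_left hyx hq.le)
    have htyq : q/ξ ≤ q*y/ξ := (div_le_div_iff_of_pos_right hξ).2 (le_mul_of_one_le_right hq.le hy1)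
    rcases le_or_gt (q*y/ξ) T₀ with hc1 | hc1
    · exact le_of_lt (lt_of_le_of_lt (le_abs_self _) (hsmall _ htyq hc1))
    · rcases eq_or_lt_of_le hty with he | hlt
      · rw [he]; exact hcrit.le
      · have h2 := hmono (le_of_lt hc1 : q*y/ξ ∈ Set.Ici T₀) (ht0 : q * x0 ξ / ξ ∈ Set.Ici T₀) hlt
        rw [hcrit] at h2
        exact h2.le
  have hsign2 : ∀ y : ℝ, x0 ξ ≤ y → Hc d q ξ ≤ hsum F d (q*y/ξ) := by
    intro y hyx
    rcases eq_or_lt_of_le hyx with he | hlt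
    · rw [← he]; exact hcrit.ge
    · have hty : q * x0 ξ / ξ < q*y/ξ :=
        (div_lt_div_iff_of_pos_right hξ).2 (mul_lt_mul_of_pos_left hlt hq)
      have h2 := hmono (ht0 : q * x0 ξ / ξ ∈ Set.Ici T₀)
        (le_trans ht0 hty.le : q*y/ξ ∈ Set.Ici T₀) hty
      rw [hcrit] at h2
      exact h2.le
  have hmono1 : MonotoneOn (fun z => PhiT d q F z ξ) (Set.Icc 1 (x0 ξ)) := by
    apply monotoneOn_of_deriv_nonneg (convex_Icc _ _ : Convex ℝ (Set.Icc _ _))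
    · intro z hz
      have : (0:ℝ) < z := lt_of_lt_of_le one_pos hz.1
      exact (hasDerivAt_phi F hq hξ this).continuousAt.continuousWithinAt
    · intro z hz
      rw [interior_Icc] at hz
      have : (0:ℝ) < z := lt_trans one_pos hz.1
      exact (hasDerivAt_phi F hq hξ this).differentiableAt.differentiableWithinAt
    · intro z hz
      rw [interior_Icc] at hz
      have hz0 : (0:ℝ) < z := lt_trans one_pos hz.1
      rw [(hasDerivAt_phi F hq hξ hz0).deriv]
      exact dphi_nonneg F hd0 hq hξ hz0 (hsign z hz.1.le hz.2.le)
  have hanti : AntitoneOn (fun z => PhiT d q F z ξ) (Set.Ici (x0 ξ)) := by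
    apply antitoneOn_of_deriv_nonpos (convex_Ici _ : Convex ℝ (Set.Ici _))
    · intro z hz
      have : (0:ℝ) < z := lt_of_lt_of_le hx0pos hz
      exact (hasDerivAt_phi F hq hξ this).continuousAt.continuousWithinAt
    · intro z hz
      rw [interior_Ici] at hz
      have : (0:ℝ) < z := lt_trans hx0pos hz
      exact (hasDerivAt_phi F hq hξ this).differentiableAt.differentiableWithinAt
    · intro z hz
      rw [interior_Ici] at hz
      have hz0 : (0:ℝ) < z := lt_trans hx0pos hz
      rw [(hasDerivAt_phi F hq hξ hz0).deriv]
      exact dphi_nonpos F hd0 hq hξ hz0 (hsign2 z hz.le)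
  intro x hx1'
  rcases le_total x (x0 ξ) with hc | hc
  · exact hmono1 (Set.mem_Icc.2 ⟨hx1', hc⟩) (Set.mem_Icc.2 ⟨hx1, le_refl _⟩) hc
  · exact hanti (Set.mem_Ici.2 (le_refl _)) (Set.mem_Ici.2 hc) hc

/-- Lower growth bound for the critical value. -/
lemma crit_lower (hd : 2 < d) (hq : 0 < q) (hFv : ValidT F)
    (hn : 1 ≤ lexpT F) (hFn : 0 < F (lexpT F))
    (hx0 : ∀ᶠ ξ : ℝ in atTop, 1 ≤ x0 ξ ∧ HasDerivAt (fun z => PhiT d q F z ξ) 0 (x0 ξ)) :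
    ∃ s : ℝ, 1/d < s ∧ ∀ᶠ ξ : ℝ in atTop, ξ ^ s ≤ PhiT d q F (x0 ξ) ξ := by
  set n := lexpT F with hndef
  have hd0 : (0:ℝ) < d := by linarith
  have hdn1 : (0:ℝ) < d*n - 1 := by nlinarith
  set γ := d*n/(d*n-1) with hγdef
  have hγ : 1 < γ := (one_lt_div hdn1).2 (by linarith)
  set e := (γ+1)/2 with hedef
  have he1 : 1 < e := by rw [hedef]; linarith
  have heγ : e < γ := by rw [hedef]; linarith
  set s := (e+1)/(2*d) with hsdef
  have hs : 1/d < s := by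
    rw [hsdef, div_lt_div_iff₀ hd0 (by linarith : (0:ℝ) < 2*d)]
    nlinarith
  have hse : s < e/d := by
    rw [hsdef, div_lt_div_iff₀ (by linarith : (0:ℝ) < 2*d) hd0]
    nlinarith
  have hkey : (e-1)*n < e/d := by
    have h5 : e * (d*n-1) < d*n := (lt_div_iff₀ hdn1).1 heγ
    rw [lt_div_iff₀ hd0]
    nlinarith
  refine ⟨s, hs, ?_⟩
  have hu : Tendsto (fun ξ : ℝ => q * ξ^(e-1)) atTop atTop :=
    (tendsto_rpow_atTop (by linarith : (0:ℝ) < e-1)).const_mul_atTop hq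
  have hev4 : ∀ᶠ ξ : ℝ in atTop, evalT F (q * ξ^(e-1)) ≤ (F n + 1) * (q*ξ^(e-1))^(n:ℝ) :=
    hu.eventually ((eventual_t_facts F hd hn hFn).mono (fun t h => h.2.2.2.2))
  set C := 2*Real.pi*(F n + 1)*q^(n:ℝ) with hCdef
  have hW : Tendsto (fun ξ : ℝ => C * ξ^((e-1)*n - e/d) + ξ^(s - e/d)) atTop (𝓝 0) := by
    have h1 : Tendsto (fun ξ : ℝ => ξ^((e-1)*n - e/d)) atTop (𝓝 0) := by
      have := tendsto_rpow_neg_atTop (by linarith : (0:ℝ) < e/d - (e-1)*n)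
      simpa [neg_sub] using this
    have h2 : Tendsto (fun ξ : ℝ => ξ^(s - e/d)) atTop (𝓝 0) := by
      have := tendsto_rpow_neg_atTop (by linarith : (0:ℝ) < e/d - s)
      simpa [neg_sub] using this
    simpa using (h1.const_mul C).add h2
  have hWev : ∀ᶠ ξ : ℝ in atTop, C * ξ^((e-1)*n - e/d) + ξ^(s - e/d) ≤ 1 :=
    hW.eventually (eventually_le_nhds one_pos)
  filter_upwards [crit_max hd hq hFv hn hFn hx0, hev4, hWev, eventually_ge_atTop 1]
    with ξ hmax h4 hw hξ1
  have hξ : (0:ℝ) < ξ := lt_of_lt_of_le one_pos hξ1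
  have hx1 : (1:ℝ) ≤ ξ^e := Real.one_le_rpow hξ1 (by linarith)
  have h5 := hmax (ξ^e) hx1
  have hPhi : PhiT d q F (ξ^e) ξ = ξ^(e/d) - 2*Real.pi * evalT F (q*ξ^(e-1)) := by
    rw [PhiT, ← Real.rpow_mul hξ.le, mul_one_div]
    congr 2
    rw [Real.rpow_sub hξ, Real.rpow_one, mul_div_assoc]
  have hq_n : (q*ξ^(e-1))^(n:ℝ) = q^(n:ℝ) * ξ^((e-1)*n) := by
    rw [Real.mul_rpow hq.le (Real.rpow_nonneg hξ.le _), ← Real.rpow_mul hξ.le]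
  have h6 : 2*Real.pi * evalT F (q*ξ^(e-1)) ≤ C * ξ^((e-1)*n) := by
    have hπ := Real.pi_pos
    calc 2*Real.pi * evalT F (q*ξ^(e-1)) ≤ 2*Real.pi * ((F n + 1) * (q*ξ^(e-1))^(n:ℝ)) :=
          mul_le_mul_of_nonneg_left h4 (by positivity)
      _ = C * ξ^((e-1)*n) := by rw [hq_n, hCdef]; ring
  have h7 : C*ξ^((e-1)*n) + ξ^s ≤ ξ^(e/d) := by
    have e9 : C*ξ^((e-1)*n) + ξ^s = (C*ξ^((e-1)*n - e/d) + ξ^(s - e/d)) * ξ^(e/d) := by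
      have r1 : ξ^((e-1)*n) = ξ^((e-1)*n - e/d) * ξ^(e/d) := by
        rw [← Real.rpow_add hξ]; congr 1; ring
      have r2 : ξ^s = ξ^(s - e/d) * ξ^(e/d) := by
        rw [← Real.rpow_add hξ]; congr 1; ring
      rw [r1, r2]; ring
    rw [e9]
    calc (C*ξ^((e-1)*n - e/d) + ξ^(s - e/d)) * ξ^(e/d)
        ≤ 1 * ξ^(e/d) := mul_le_mul_of_nonneg_right hw (Real.rpow_nonneg hξ.le _)
      _ = ξ^(e/d) := one_mul _
  have h8 : ξ^s ≤ PhiT d q F (ξ^e) ξ := by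
    rw [hPhi]
    linarith
  linarith

set_option maxHeartbeats 1000000 in
/-- Upper growth bound for the critical value. -/
lemma crit_upper (hd : 2 < d) (hq : 0 < q) (hFv : ValidT F)
    (hn : 1 ≤ lexpT F) (hFn : 0 < F (lexpT F))
    (hx0 : ∀ᶠ ξ : ℝ in atTop, 1 ≤ x0 ξ ∧ HasDerivAt (fun z => PhiT d q F z ξ) 0 (x0 ξ)) :
    ∃ C : ℝ, 0 < C ∧ ∀ᶠ ξ : ℝ in atTop, PhiT d q F (x0 ξ) ξ ≤ C * ξ^(1/(d-1)) := by
  set n := lexpT F with hndef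
  have hd0 : (0:ℝ) < d := by linarith
  have hd1 : (0:ℝ) < d - 1 := by linarith
  have h1d : 1/d < 1 := by rw [div_lt_one hd0]; linarith
  have hp : (0:ℝ) < n - 1/d := by linarith
  have hdn1 : (0:ℝ) < d*n - 1 := by nlinarith
  have hπ := Real.pi_pos
  have hqd : (0:ℝ) < q^(1/d) := Real.rpow_pos_of_pos hq _
  set c₂ := (1/d)/(2*Real.pi*q^(1/d)) with hc₂def
  have hc₂ : 0 < c₂ := by rw [hc₂def]; positivity
  set c₃ := 2*c₂/(F n * n) with hc₃def
  have hFnn : 0 < F n * n := by nlinarith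
  have hc₃ : 0 < c₃ := by rw [hc₃def]; positivity
  set B := c₃^(1/(n-1/d)) with hBdef
  have hB : 0 < B := Real.rpow_pos_of_pos hc₃ _
  set C7 := B^(1/d)/q^(1/d) with hC7def
  have hC7 : 0 < C7 := by
    have : (0:ℝ) < B^(1/d) := Real.rpow_pos_of_pos hB _
    rw [hC7def]; positivity
  refine ⟨C7, hC7, ?_⟩
  have htt := crit_t0_tendsto hd hq hFv hx0
  filter_upwards [hx0, eventually_gt_atTop 0, eventually_ge_atTop 1,
    htt.eventually (eventual_t_facts F hd hn hFn)] with ξ hx hξ hξ1 hfacts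
  obtain ⟨hx1, hder⟩ := hx
  have hx0pos : 0 < x0 ξ := by linarith
  set t0 := q * x0 ξ / ξ with ht0def
  have ht0pos : 0 < t0 := hfacts.1
  have hcrit : hsum F d t0 = Hc d q ξ := crit_hsum_eq F hd0 hq hξ hx0pos hder
  have hHc : Hc d q ξ = c₂ * ξ^(1/d) := Hc_eq hq hξ
  -- bound on t0
  have ht0p : t0^(n - 1/d) ≤ c₃ * ξ^(1/d) := by
    have h1 : (F n * n / 2) * t0^(n - 1/d) ≤ hsum F d t0 := hfacts.2.2.1
    rw [hcrit, hHc] at h1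
    rw [hc₃def]
    rw [div_mul_eq_mul_div, le_div_iff₀ hFnn]
    nlinarith [h1]
  have ht0b : t0 ≤ B * ξ^((1/d)*(1/(n-1/d))) := by
    have h2 : t0 = (t0^(n-1/d))^(1/(n-1/d)) := by
      rw [← Real.rpow_mul ht0pos.le, mul_one_div, div_self hp.ne', Real.rpow_one]
    rw [h2]
    calc (t0^(n-1/d))^(1/(n-1/d)) ≤ (c₃ * ξ^(1/d))^(1/(n-1/d)) :=
          Real.rpow_le_rpow (Real.rpow_nonneg ht0pos.le _) ht0p (by positivity)
      _ = B * ξ^((1/d)*(1/(n-1/d))) := by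
          rw [Real.mul_rpow hc₃.le (Real.rpow_nonneg hξ.le _), ← Real.rpow_mul hξ.le, hBdef]
  -- from t0 to x0
  have hx0eq : x0 ξ = t0 * (ξ/q) := by
    rw [ht0def]; field_simp
  have hxd : (x0 ξ)^(1/d) ≤ C7 * ξ^((1/(d*n-1))*(1/d) + 1/d) := by
    have e1 : (x0 ξ)^(1/d) = t0^(1/d) * (ξ/q)^(1/d) := by
      rw [hx0eq, Real.mul_rpow ht0pos.le (by positivity)]
    have e2 : t0^(1/d) ≤ (B * ξ^((1/d)*(1/(n-1/d))))^(1/d) :=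
      Real.rpow_le_rpow ht0pos.le ht0b (by positivity)
    have hexp : (1/d)*(1/(n-1/d)) = 1/(d*n-1) := by
      rw [div_mul_div_comm, one_mul]
      congr 1
      rw [mul_sub, mul_one_div, div_self hd0.ne']
    have e3 : (B * ξ^((1/d)*(1/(n-1/d))))^(1/d) = B^(1/d) * ξ^((1/(d*n-1))*(1/d)) := by
      rw [Real.mul_rpow hB.le (Real.rpow_nonneg hξ.le _), ← Real.rpow_mul hξ.le, hexp]
    have e4 : (ξ/q)^(1/d) = ξ^(1/d)/q^(1/d) := Real.div_rpow hξ.le hq.le _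
    rw [e1, e4]
    calc t0^(1/d) * (ξ^(1/d)/q^(1/d))
        ≤ (B * ξ^((1/d)*(1/(n-1/d))))^(1/d) * (ξ^(1/d)/q^(1/d)) := by
          exact mul_le_mul_of_nonneg_right e2 (by positivity)
      _ = C7 * ξ^((1/(d*n-1))*(1/d) + 1/d) := by
          rw [e3, Real.rpow_add hξ, hC7def]
          ring
  have hexp2 : (1/(d*n-1))*(1/d) + 1/d = n/(d*n-1) := by
    field_simp
    ring
  have hexp3 : ξ^(n/(d*n-1)) ≤ ξ^(1/(d-1)) := by
    apply Real.rpow_le_rpow_of_exponent_le hξ1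
    rw [div_le_div_iff₀ hdn1 hd1]
    nlinarith
  have hfinal : PhiT d q F (x0 ξ) ξ ≤ (x0 ξ)^(1/d) := by
    have hev : 0 < evalT F t0 := hfacts.2.1
    have heq : PhiT d q F (x0 ξ) ξ = (x0 ξ)^(1/d) - 2*Real.pi*evalT F t0 := by
      rw [PhiT, ht0def]
    have h2π : 0 ≤ 2*Real.pi*evalT F t0 :=
      mul_nonneg (by positivity) hev.le
    rw [heq]
    linarith
  calc PhiT d q F (x0 ξ) ξ ≤ (x0 ξ)^(1/d) := hfinal
    _ ≤ C7 * ξ^((1/(d*n-1))*(1/d) + 1/d) := hxd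
    _ = C7 * ξ^(n/(d*n-1)) := by rw [hexp2]
    _ ≤ C7 * ξ^(1/(d-1)) := mul_le_mul_of_nonneg_left hexp3 hC7.le

end CritMain

end Fact2

namespace Fact2

variable {d q : ℝ}

/-- Derived properties of the output of the (truncated) duality operator. -/
def OutP (d : ℝ) (g : TwistFun) : Prop :=
  ValidT g ∧ 1/d < lexpT g ∧ lexpT g ≤ 1/(d-1) ∧ g (lexpT g) ≠ 0

/-- Recovering information on `lexpT g` from two-sided growth bounds on `evalT g`. -/
lemma lexp_of_bounds (hd : 2 < d) {g : TwistFun} (hv : ValidT g)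
    {s C : ℝ} (hs : 1/d < s) (hC : 0 < C)
    (hlow : ∀ᶠ ξ : ℝ in atTop, ξ^s/(4*Real.pi) ≤ evalT g ξ)
    (hupp : ∀ᶠ ξ : ℝ in atTop, evalT g ξ ≤ C * ξ^(1/(d-1))) :
    1/d < lexpT g ∧ lexpT g ≤ 1/(d-1) ∧ 0 < g (lexpT g) := by
  have hπ := Real.pi_pos
  have hd0 : (0:ℝ) < d := by linarith
  have hg0 : g ≠ 0 := by
    rintro rfl
    obtain ⟨ξ, h1, h2⟩ := (hlow.and (eventually_gt_atTop 0)).exists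
    rw [evalT_zero_fun] at h1
    have h3 : (0:ℝ) < ξ^s := Real.rpow_pos_of_pos h2 _
    have h4 : (0:ℝ) < ξ^s/(4*Real.pi) := by positivity
    linarith
  have hmem : lexpT g ∈ g.support := lexpT_mem hg0
  have ha : g (lexpT g) ≠ 0 := Finsupp.mem_support_iff.1 hmem
  have hR : Tendsto (fun ξ : ℝ => ∑ κ ∈ g.support, g κ * ξ^(κ - lexpT g)) atTop
      (𝓝 (g (lexpT g))) :=
    tendsto_sum_shifted _ _ _ (fun κ hκ => le_lexpT hκ) hmem
  have hapos : 0 < g (lexpT g) := by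
    rcases ha.lt_or_gt with hneg | hpos
    · exfalso
      have hev : ∀ᶠ ξ : ℝ in atTop, (∑ κ ∈ g.support, g κ * ξ^(κ - lexpT g)) < 0 :=
        hR.eventually (eventually_lt_nhds hneg)
      obtain ⟨ξ, h1, h2, h3⟩ := (hev.and (hlow.and (eventually_gt_atTop 0))).exists
      have heval : evalT g ξ = (∑ κ ∈ g.support, g κ * ξ^(κ - lexpT g)) * ξ^(lexpT g) :=
        evalT_factor g _ h3
      have h4 : evalT g ξ < 0 := by
        rw [heval]
        exact mul_neg_of_neg_of_pos h1 (Real.rpow_pos_of_pos h3 _)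
      have h5 : (0:ℝ) < ξ^s := Real.rpow_pos_of_pos h3 _
      have h6 : (0:ℝ) < ξ^s/(4*Real.pi) := by positivity
      linarith
    · exact hpos
  have hup : lexpT g ≤ 1/(d-1) := by
    by_contra hcon
    push_neg at hcon
    have hev1 : ∀ᶠ ξ : ℝ in atTop, g (lexpT g)/2 ≤ ∑ κ ∈ g.support, g κ * ξ^(κ - lexpT g) :=
      hR.eventually (eventually_ge_nhds (by linarith))
    have hev2 : ∀ᶠ ξ : ℝ in atTop, 2*C/(g (lexpT g)) < ξ^(lexpT g - 1/(d-1)) :=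
      (tendsto_rpow_atTop (by linarith)).eventually_gt_atTop _
    obtain ⟨ξ, h1, h2, h3, h4⟩ := (hev1.and (hev2.and (hupp.and (eventually_gt_atTop 0)))).exists
    have heval : evalT g ξ = (∑ κ ∈ g.support, g κ * ξ^(κ - lexpT g)) * ξ^(lexpT g) :=
      evalT_factor g _ h4
    have hκpos : (0:ℝ) < ξ^(lexpT g) := Real.rpow_pos_of_pos h4 _
    have hupos : (0:ℝ) < ξ^(1/(d-1)) := Real.rpow_pos_of_pos h4 _
    have h5 : (g (lexpT g)/2) * ξ^(lexpT g) ≤ evalT g ξ := by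
      rw [heval]
      exact mul_le_mul_of_nonneg_right h1 hκpos.le
    have h6 : (g (lexpT g)/2) * ξ^(lexpT g) ≤ C * ξ^(1/(d-1)) := le_trans h5 h3
    have h7 : ξ^(lexpT g) = ξ^(lexpT g - 1/(d-1)) * ξ^(1/(d-1)) := by
      rw [← Real.rpow_add h4]; congr 1; ring
    rw [h7, ← mul_assoc] at h6
    have h8 : g (lexpT g)/2 * ξ^(lexpT g - 1/(d-1)) ≤ C :=
      le_of_mul_le_mul_right h6 hupos
    have h9 : 2*C/(g (lexpT g)) * (g (lexpT g)/2) < ξ^(lexpT g - 1/(d-1)) * (g (lexpT g)/2) :=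
      mul_lt_mul_of_pos_right h2 (by positivity)
    rw [div_mul_div_comm, mul_comm (2*C)] at h9
    have h10 : 2*C/(g (lexpT g)) * (g (lexpT g)/2) = C := by
      field_simp
    nlinarith [h8, h9, h10]
  have hlo : 1/d < lexpT g := by
    rcases lt_or_ge (1/d) (lexpT g) with h | hcon
    · exact h
    · exfalso
      have hκs : lexpT g < s := lt_of_le_of_lt hcon hs
      have hev1 : ∀ᶠ ξ : ℝ in atTop,
          (∑ κ ∈ g.support, g κ * ξ^(κ - lexpT g)) ≤ g (lexpT g) + 1 :=
        hR.eventually (eventually_le_nhds (lt_add_one _))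
      have hev2 : ∀ᶠ ξ : ℝ in atTop, 4*Real.pi*(g (lexpT g) + 1) < ξ^(s - lexpT g) :=
        (tendsto_rpow_atTop (by linarith)).eventually_gt_atTop _
      obtain ⟨ξ, h1, h2, h3, h4⟩ :=
        (hev1.and (hev2.and (hlow.and (eventually_gt_atTop 0)))).exists
      have heval : evalT g ξ = (∑ κ ∈ g.support, g κ * ξ^(κ - lexpT g)) * ξ^(lexpT g) :=
        evalT_factor g _ h4
      have hκpos : (0:ℝ) < ξ^(lexpT g) := Real.rpow_pos_of_pos h4 _
      have h5 : evalT g ξ ≤ (g (lexpT g) + 1) * ξ^(lexpT g) := by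
        rw [heval]
        exact mul_le_mul_of_nonneg_right h1 hκpos.le
      have h6 : ξ^s/(4*Real.pi) ≤ (g (lexpT g) + 1) * ξ^(lexpT g) := le_trans h3 h5
      have h7 : ξ^s = ξ^(s - lexpT g) * ξ^(lexpT g) := by
        rw [← Real.rpow_add h4]; congr 1; ring
      have h8 : ξ^(s - lexpT g) ≤ 4*Real.pi*(g (lexpT g) + 1) := by
        rw [h7] at h6
        rw [div_le_iff₀ (by positivity : (0:ℝ) < 4*Real.pi)] at h6
        have := le_of_mul_le_mul_right (by linarith [h6] :
          ξ^(s - lexpT g) * ξ^(lexpT g) ≤ (4*Real.pi*(g (lexpT g) + 1)) * ξ^(lexpT g)) hκpos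
        exact this
      linarith
  exact ⟨hlo, hup, hapos⟩

/-- Growth bounds on `evalT g` from `IsDualPos`. -/
lemma dualPos_bounds (hd : 2 < d) (hq : 0 < q) {F g : TwistFun} (hFv : ValidT F)
    (hn : 1 ≤ lexpT F) (hFn : 0 < F (lexpT F)) (hdp : IsDualPos d q F g) :
    (∃ s, 1/d < s ∧ ∀ᶠ ξ : ℝ in atTop, ξ^s/(4*Real.pi) ≤ evalT g ξ) ∧
    (∃ C, 0 < C ∧ ∀ᶠ ξ : ℝ in atTop, evalT g ξ ≤ C * ξ^(1/(d-1))) := by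
  obtain ⟨hvg, x0, hx0, htend⟩ := hdp
  have hπ := Real.pi_pos
  have hd0 : (0:ℝ) < d := by linarith
  obtain ⟨s, hs, hev⟩ := crit_lower hd hq hFv hn hFn hx0
  obtain ⟨C, hC, hev2⟩ := crit_upper hd hq hFv hn hFn hx0
  have h1 : ∀ᶠ ξ : ℝ in atTop, PhiT d q F (x0 ξ) ξ / (2*Real.pi) - evalT g ξ < 1 :=
    htend.eventually (eventually_lt_nhds one_pos)
  have h2 : ∀ᶠ ξ : ℝ in atTop, -1 < PhiT d q F (x0 ξ) ξ / (2*Real.pi) - evalT g ξ :=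
    htend.eventually (eventually_gt_nhds (by norm_num : (-1:ℝ) < 0))
  constructor
  · refine ⟨s, hs, ?_⟩
    have hs0 : (0:ℝ) < s := lt_trans (by positivity) hs
    have hev3 : ∀ᶠ ξ : ℝ in atTop, 4*Real.pi ≤ ξ^s :=
      (tendsto_rpow_atTop hs0).eventually_ge_atTop _
    filter_upwards [hev, h1, hev3] with ξ hΦ hlt h4π
    have hped : ξ^s/(2*Real.pi) ≤ PhiT d q F (x0 ξ) ξ/(2*Real.pi) :=
      (div_le_div_iff_of_pos_right (by positivity)).2 hΦ
    have hone : (1:ℝ) ≤ ξ^s/(4*Real.pi) := (one_le_div (by positivity)).2 h4π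
    have hiden : ξ^s/(2*Real.pi) - ξ^s/(4*Real.pi) = ξ^s/(4*Real.pi) := by ring
    linarith
  · refine ⟨C/(2*Real.pi) + 1, add_pos (div_pos hC (by positivity)) one_pos, ?_⟩
    filter_upwards [hev2, h2, eventually_ge_atTop 1] with ξ hΦ hgt hξ1
    have hξ : (0:ℝ) < ξ := lt_of_lt_of_le one_pos hξ1
    have hd1 : (0:ℝ) < d - 1 := by linarith
    have hu1 : (1:ℝ) ≤ ξ^(1/(d-1)) := Real.one_le_rpow hξ1 (le_of_lt (div_pos one_pos hd1))
    have h3 : evalT g ξ < PhiT d q F (x0 ξ) ξ/(2*Real.pi) + 1 := by linarith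
    have h4 : PhiT d q F (x0 ξ) ξ/(2*Real.pi) ≤ (C/(2*Real.pi)) * ξ^(1/(d-1)) := by
      rw [div_le_iff₀ (by positivity : (0:ℝ) < 2*Real.pi)]
      calc PhiT d q F (x0 ξ) ξ ≤ C * ξ^(1/(d-1)) := hΦ
        _ = C/(2*Real.pi) * ξ^(1/(d-1)) * (2*Real.pi) := by field_simp
    calc evalT g ξ ≤ PhiT d q F (x0 ξ) ξ/(2*Real.pi) + 1 := h3.le
      _ ≤ (C/(2*Real.pi)) * ξ^(1/(d-1)) + 1 := by linarith
      _ ≤ (C/(2*Real.pi)) * ξ^(1/(d-1)) + 1 * ξ^(1/(d-1)) := by nlinarith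
      _ = (C/(2*Real.pi) + 1) * ξ^(1/(d-1)) := by ring

lemma dualPos_eval_pos (hd : 2 < d) (hq : 0 < q) {F g : TwistFun} (hFv : ValidT F)
    (hn : 1 ≤ lexpT F) (hFn : 0 < F (lexpT F)) (hdp : IsDualPos d q F g) :
    ∀ᶠ ξ : ℝ in atTop, 0 < evalT g ξ := by
  obtain ⟨⟨s, hs, hlow⟩, _⟩ := dualPos_bounds hd hq hFv hn hFn hdp
  filter_upwards [hlow, eventually_gt_atTop 0] with ξ h1 h2
  have hπ := Real.pi_pos
  have h3 : (0:ℝ) < ξ^s := Real.rpow_pos_of_pos h2 _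
  have h4 : (0:ℝ) < ξ^s/(4*Real.pi) := by positivity
  linarith

/-- The output of the duality operator satisfies `OutP`. -/
lemma dual_out (hd : 2 < d) (hq : 0 < q) {F g : TwistFun} (hFv : ValidT F)
    (hn : 1 ≤ lexpT F) (hdual : IsDual d q F g) : OutP d g := by
  rcases hdual with ⟨hpos, hdp⟩ | ⟨hneg, hdp⟩
  · obtain ⟨⟨s, hs, hlow⟩, ⟨C, hC, hupp⟩⟩ := dualPos_bounds hd hq hFv hn hpos hdp
    obtain ⟨h1, h2, h3⟩ := lexp_of_bounds hd hdp.1 hs hC hlow hupp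
    exact ⟨hdp.1, h1, h2, h3.ne'⟩
  · have hFv' : ValidT (-F) := validT_neg hFv
    have hn' : 1 ≤ lexpT (-F) := by rw [lexpT_neg]; exact hn
    have hFn' : 0 < (-F) (lexpT (-F)) := by
      rw [lexpT_neg, Finsupp.neg_apply]
      linarith
    obtain ⟨⟨s, hs, hlow⟩, ⟨C, hC, hupp⟩⟩ := dualPos_bounds hd hq hFv' hn' hFn' hdp
    obtain ⟨h1, h2, h3⟩ := lexp_of_bounds hd hdp.1 hs hC hlow hupp
    have hvg : ValidT g := by
      have := validT_neg hdp.1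
      rwa [neg_neg] at this
    rw [lexpT_neg] at h1 h2
    rw [lexpT_neg, Finsupp.neg_apply] at h3
    exact ⟨hvg, h1, h2, by intro h; rw [h] at h3; simp at h3⟩

/-- `Φ` changes by the twist of the difference. -/
lemma phi_diff (A B : TwistFun) (x ξ : ℝ) :
    PhiT d q B x ξ = PhiT d q A x ξ - 2*Real.pi * evalT (B - A) (q*x/ξ) := by
  rw [PhiT, PhiT, evalT_sub]
  ring

/-- Core injectivity: a positive top-degree difference is impossible. -/
lemma no_pos_diff (hd : 2 < d) (hq : 0 < q) {A B : TwistFun}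
    (hAv : ValidT A) (hBv : ValidT B)
    (hnB : 1 ≤ lexpT B) (hBn : 0 < B (lexpT B))
    {x0 y0 : ℝ → ℝ}
    (hx0 : ∀ᶠ ξ : ℝ in atTop, 1 ≤ x0 ξ ∧ HasDerivAt (fun z => PhiT d q A z ξ) 0 (x0 ξ))
    (hy0 : ∀ᶠ ξ : ℝ in atTop, 1 ≤ y0 ξ ∧ HasDerivAt (fun z => PhiT d q B z ξ) 0 (y0 ξ))
    (htend : Tendsto (fun ξ => PhiT d q A (x0 ξ) ξ - PhiT d q B (y0 ξ) ξ) atTop (𝓝 0))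
    (hδ : 0 < (A - B) (lexpT (A - B))) : False := by
  classical
  have hπ := Real.pi_pos
  set D := A - B with hDdef
  have hD0 : D ≠ 0 := by
    intro h
    rw [h] at hδ
    simp at hδ
  have hmemD : lexpT D ∈ D.support := lexpT_mem hD0
  have hκ0 : 0 ≤ lexpT D := by
    have hsub := Finsupp.support_sub (f := A) (g := B) hmemD
    rcases Finset.mem_union.1 hsub with h | h
    · exact hAv _ h
    · exact hBv _ h
  have hRD : Tendsto (fun t : ℝ => ∑ κ ∈ D.support, D κ * t^(κ - lexpT D)) atTop
      (𝓝 (D (lexpT D))) :=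
    tendsto_sum_shifted _ _ _ (fun κ hκ => le_lexpT hκ) hmemD
  have hevD : ∀ᶠ t : ℝ in atTop, D (lexpT D)/2 ≤ ∑ κ ∈ D.support, D κ * t^(κ - lexpT D) :=
    hRD.eventually (eventually_ge_nhds (by linarith))
  have htt := crit_t0_tendsto hd hq hAv hx0
  have hmaxB := crit_max hd hq hBv hnB hBn hy0
  have hgt : ∀ᶠ ξ : ℝ in atTop,
      -(Real.pi * D (lexpT D)) < PhiT d q A (x0 ξ) ξ - PhiT d q B (y0 ξ) ξ :=
    htend.eventually (eventually_gt_nhds (by nlinarith))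
  obtain ⟨ξ, hx, hmax, hevD', ht1, hgt', hξ⟩ :=
    (hx0.and (hmaxB.and ((htt.eventually hevD).and ((htt.eventually_ge_atTop 1).and
      (hgt.and (eventually_gt_atTop 0)))))).exists
  obtain ⟨hx1, _⟩ := hx
  have ht0pos : (0:ℝ) < q * x0 ξ / ξ := lt_of_lt_of_le one_pos ht1
  have hBx : PhiT d q B (x0 ξ) ξ ≤ PhiT d q B (y0 ξ) ξ := hmax (x0 ξ) hx1
  have hid : PhiT d q B (x0 ξ) ξ = PhiT d q A (x0 ξ) ξ + 2*Real.pi * evalT D (q * x0 ξ/ξ) := by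
    have := phi_diff (d := d) (q := q) B A (x0 ξ) ξ
    have hBA : A - B = -(B - A) := by rw [neg_sub]
    rw [this, hDdef, hBA, evalT_neg']
    ring
  have hevalD : D (lexpT D)/2 ≤ evalT D (q * x0 ξ/ξ) := by
    have heval : evalT D (q * x0 ξ/ξ)
        = (∑ κ ∈ D.support, D κ * (q * x0 ξ/ξ)^(κ - lexpT D)) * (q * x0 ξ/ξ)^(lexpT D) :=
      evalT_factor D _ ht0pos
    have hone : (1:ℝ) ≤ (q * x0 ξ/ξ)^(lexpT D) := Real.one_le_rpow ht1 hκ0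
    rw [heval]
    calc D (lexpT D)/2 = D (lexpT D)/2 * 1 := by ring
      _ ≤ (∑ κ ∈ D.support, D κ * (q * x0 ξ/ξ)^(κ - lexpT D)) * (q * x0 ξ/ξ)^(lexpT D) := by
          apply mul_le_mul hevD' hone one_pos.le
          linarith [hevD', hδ]
  have hfinal : PhiT d q A (x0 ξ) ξ - PhiT d q B (y0 ξ) ξ ≤ -(Real.pi * D (lexpT D)) := by
    have h1 : PhiT d q A (x0 ξ) ξ - PhiT d q B (x0 ξ) ξ = -(2*Real.pi * evalT D (q * x0 ξ/ξ)) := by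
      rw [hid]; ring
    nlinarith [hevalD, hBx]
  linarith [hgt', hfinal]

/-- Injectivity of the positive-branch dual. -/
lemma dualPos_inj (hd : 2 < d) (hq : 0 < q) {A B g : TwistFun}
    (hAv : ValidT A) (hnA : 1 ≤ lexpT A) (hAn : 0 < A (lexpT A))
    (hBv : ValidT B) (hnB : 1 ≤ lexpT B) (hBn : 0 < B (lexpT B))
    (hA : IsDualPos d q A g) (hB : IsDualPos d q B g) : A = B := by
  obtain ⟨hvg, x0, hx0, htendA⟩ := hA
  obtain ⟨-, y0, hy0, htendB⟩ := hB
  have hπ := Real.pi_pos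
  have htend : Tendsto (fun ξ => PhiT d q A (x0 ξ) ξ - PhiT d q B (y0 ξ) ξ) atTop (𝓝 0) := by
    have h0 := htendA.sub htendB
    have h1 : (fun ξ => (PhiT d q A (x0 ξ) ξ / (2*Real.pi) - evalT g ξ)
        - (PhiT d q B (y0 ξ) ξ / (2*Real.pi) - evalT g ξ))
        = fun ξ => (PhiT d q A (x0 ξ) ξ - PhiT d q B (y0 ξ) ξ) / (2*Real.pi) := by
      funext ξ
      field_simp
      ring
    rw [h1, sub_zero] at h0
    have h2 := h0.const_mul (2*Real.pi)
    rw [mul_zero] at h2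
    refine h2.congr (fun ξ => ?_)
    field_simp
  by_contra hne
  have hD0 : A - B ≠ 0 := sub_ne_zero_of_ne hne
  have hδ := lexpT_coeff_ne hD0
  rcases hδ.lt_or_gt with hneg | hpos
  · -- swap roles
    have hδ' : 0 < (B - A) (lexpT (B - A)) := by
      have h1 : B - A = -(A - B) := by rw [neg_sub]
      rw [h1, lexpT_neg, Finsupp.neg_apply]
      linarith
    have htend' : Tendsto (fun ξ => PhiT d q B (y0 ξ) ξ - PhiT d q A (x0 ξ) ξ) atTop (𝓝 0) := by
      have := htend.neg
      rw [neg_zero] at this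
      exact this.congr (fun ξ => by ring)
    exact no_pos_diff hd hq hBv hAv hnA hAn hy0 hx0 htend' hδ'
  · exact no_pos_diff hd hq hAv hBv hnB hBn hx0 hy0 htend hpos

/-- Injectivity of the dual. -/
lemma dual_inj (hd : 2 < d) (hq : 0 < q) {A B f : TwistFun}
    (hAv : ValidT A) (hnA : 1 ≤ lexpT A)
    (hBv : ValidT B) (hnB : 1 ≤ lexpT B)
    (hA : IsDual d q A f) (hB : IsDual d q B f) : A = B := by
  have negprops : ∀ (G : TwistFun), ValidT G → 1 ≤ lexpT G → G (lexpT G) < 0 →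
      ValidT (-G) ∧ 1 ≤ lexpT (-G) ∧ 0 < (-G) (lexpT (-G)) := by
    intro G h1 h2 h3
    refine ⟨validT_neg h1, by rwa [lexpT_neg], ?_⟩
    rw [lexpT_neg, Finsupp.neg_apply]
    linarith
  rcases hA with ⟨hpA, hdpA⟩ | ⟨hnAneg, hdpA⟩ <;> rcases hB with ⟨hpB, hdpB⟩ | ⟨hnBneg, hdpB⟩
  · exact dualPos_inj hd hq hAv hnA hpA hBv hnB hpB hdpA hdpB
  · exfalso
    obtain ⟨h1', h2', h3'⟩ := negprops B hBv hnB hnBneg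
    have e1 := dualPos_eval_pos hd hq hAv hnA hpA hdpA
    have e2 := dualPos_eval_pos hd hq h1' h2' h3' hdpB
    obtain ⟨ξ, hh1, hh2⟩ := (e1.and e2).exists
    rw [evalT_neg'] at hh2
    linarith
  · exfalso
    obtain ⟨h1', h2', h3'⟩ := negprops A hAv hnA hnAneg
    have e1 := dualPos_eval_pos hd hq h1' h2' h3' hdpA
    have e2 := dualPos_eval_pos hd hq hBv hnB hpB hdpB
    obtain ⟨ξ, hh1, hh2⟩ := (e1.and e2).exists
    rw [evalT_neg'] at hh1
    linarith
  · obtain ⟨h1A, h2A, h3A⟩ := negprops A hAv hnA hnAneg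
    obtain ⟨h1B, h2B, h3B⟩ := negprops B hBv hnB hnBneg
    have := dualPos_inj hd hq h1A h2A h3A h1B h2B h3B hdpA hdpB
    exact neg_injective this

end Fact2

namespace Fact2

variable {d q : ℝ}

lemma shift_lexp_nat {P : TwistFun} (hP : IsShiftPoly P) :
    ∃ m : ℕ, 1 ≤ m ∧ lexpT P = m ∧ P (lexpT P) ≠ 0 := by
  obtain ⟨hP0, hsup, -⟩ := hP
  obtain ⟨m, hm1, hmeq⟩ := hsup _ (lexpT_mem hP0)
  exact ⟨m, hm1, hmeq, lexpT_coeff_ne hP0⟩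

lemma shift_one_le {P : TwistFun} (hP : IsShiftPoly P) : (1:ℝ) ≤ lexpT P := by
  obtain ⟨m, hm1, hmeq, -⟩ := shift_lexp_nat hP
  rw [hmeq]
  exact_mod_cast hm1

lemma add_shift_lexp {c P : TwistFun} (hc : ∀ κ ∈ c.support, κ < 1) (hP : IsShiftPoly P) :
    lexpT (c + P) = lexpT P ∧ (c + P) (lexpT P) = P (lexpT P) := by
  classical
  obtain ⟨m, hm1, hmeq, hPne⟩ := shift_lexp_nat hP
  have h1P : (1:ℝ) ≤ lexpT P := shift_one_le hP
  have hcP : c (lexpT P) = 0 := by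
    by_contra h
    have := hc _ (Finsupp.mem_support_iff.2 h)
    linarith
  have happ : (c + P) (lexpT P) = P (lexpT P) := by
    rw [Finsupp.add_apply, hcP, zero_add]
  have hne : (c + P) (lexpT P) ≠ 0 := by rw [happ]; exact hPne
  have hmem : lexpT P ∈ (c + P).support := Finsupp.mem_support_iff.2 hne
  have le1 : lexpT P ≤ lexpT (c + P) := le_lexpT hmem
  have le2 : lexpT (c + P) ≤ lexpT P := by
    have hne0 : c + P ≠ 0 := by
      intro h
      rw [h] at hne
      simp at hne
    have hmem2 := lexpT_mem hne0
    have hsub := Finsupp.support_add hmem2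
    rcases Finset.mem_union.1 hsub with h | h
    · linarith [hc _ h]
    · exact le_lexpT h
  exact ⟨le_antisymm le2 le1, happ⟩

lemma add_shift_valid {c P : TwistFun} (hcv : ValidT c) (hP : IsShiftPoly P) :
    ValidT (c + P) := by
  classical
  intro κ hκ
  rcases Finset.mem_union.1 (Finsupp.support_add hκ) with h | h
  · exact hcv _ h
  · obtain ⟨m, hm1, hmeq⟩ := hP.2.1 _ h
    rw [hmeq]
    positivity

lemma shift_sep {c e P Q : TwistFun} (hc : ∀ κ ∈ c.support, κ < 1)
    (he : ∀ κ ∈ e.support, κ < 1) (hP : IsShiftPoly P) (hQ : IsShiftPoly Q)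
    (heq : c + P = e + Q) : P = Q ∧ c = e := by
  have key : ∀ κ : ℝ, c κ + P κ = e κ + Q κ := by
    intro κ
    have := congrArg (fun f : TwistFun => f κ) heq
    simpa [Finsupp.add_apply] using this
  have hShiftZero : ∀ (R : TwistFun), IsShiftPoly R → ∀ κ : ℝ, κ < 1 → R κ = 0 := by
    intro R hR κ hκ
    by_contra h
    obtain ⟨m, hm1, hmeq⟩ := hR.2.1 κ (Finsupp.mem_support_iff.2 h)
    have : (1:ℝ) ≤ m := by exact_mod_cast hm1
    rw [hmeq] at hκ
    linarith
  have hSmallZero : ∀ (r : TwistFun), (∀ κ ∈ r.support, κ < 1) → ∀ κ : ℝ, 1 ≤ κ → r κ = 0 := by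
    intro r hr κ hκ
    by_contra h
    have := hr _ (Finsupp.mem_support_iff.2 h)
    linarith
  constructor
  · ext κ
    rcases lt_or_ge κ 1 with h | h
    · rw [hShiftZero P hP κ h, hShiftZero Q hQ κ h]
    · have h1 := key κ
      rw [hSmallZero c hc κ h, hSmallZero e he κ h] at h1
      linarith
  · ext κ
    rcases lt_or_ge κ 1 with h | h
    · have h1 := key κ
      rw [hShiftZero P hP κ h, hShiftZero Q hQ κ h] at h1
      linarith
    · rw [hSmallZero c hc κ h, hSmallZero e he κ h]

lemma chain_snoc' {a f : TwistFun} {L : List TwistFun} (h : Chain d q a L f) :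
    (L = [] ∧ f = a) ∨
      ∃ L' P c, L = L' ++ [P] ∧ Chain d q a L' c ∧ IsShiftPoly P ∧ IsDual d q (c + P) f := by
  induction h with
  | nil g => exact Or.inl ⟨rfl, rfl⟩
  | cons c P g f' L hP hdual hchain ih =>
    right
    rcases ih with ⟨rfl, rfl⟩ | ⟨L', Q, m, hLeq, hch', hQ, hd'⟩
    · exact ⟨[], P, c, rfl, Chain.nil c, hP, hdual⟩
    · exact ⟨P :: L', Q, m, by rw [hLeq, List.cons_append], Chain.cons c P g m L' hP hdual hch', hQ, hd'⟩

lemma chain_out (hd : 2 < d) (hq : 0 < q) {a f : TwistFun} {L : List TwistFun}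
    (h : Chain d q a L f) :
    (ValidT a ∧ lexpT a < 1) → ((L = [] ∧ f = a) ∨ OutP d f) := by
  have hd11 : 1/(d-1) < 1 := by
    rw [div_lt_one (by linarith : (0:ℝ) < d - 1)]
    linarith
  induction h with
  | nil g => exact fun _ => Or.inl ⟨rfl, rfl⟩
  | cons c P g f' L hP hdual hchain ih =>
    rintro ⟨hcv, hcl⟩
    right
    have hcsup : ∀ κ ∈ c.support, κ < 1 := fun κ hκ => lt_of_le_of_lt (le_lexpT hκ) hcl
    obtain ⟨hlexp_eq, -⟩ := add_shift_lexp hcsup hP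
    have hvF : ValidT (c + P) := add_shift_valid hcv hP
    have hnF : 1 ≤ lexpT (c + P) := by rw [hlexp_eq]; exact shift_one_le hP
    have hg : OutP d g := dual_out hd hq hvF hnF hdual
    have hgstate : ValidT g ∧ lexpT g < 1 := ⟨hg.1, lt_of_le_of_lt hg.2.2.1 hd11⟩
    rcases ih hgstate with ⟨rfl, rfl⟩ | hout
    · exact hg
    · exact hout

lemma chain_unique (hd : 2 < d) (hq : 0 < q) {a b : TwistFun}
    (hav : ValidT a) (hal : lexpT a ≤ 1/d) (hbv : ValidT b) (hbl : lexpT b ≤ 1/d) :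
    ∀ (k : ℕ) (Ps Qs : List TwistFun) (f : TwistFun), Ps.length ≤ k →
      Chain d q a Ps f → Chain d q b Qs f → Ps = Qs := by
  have hd0 : (0:ℝ) < d := by linarith
  have h1d1 : 1/d < 1 := by rw [div_lt_one hd0]; linarith
  have hd11 : 1/(d-1) < 1 := by
    rw [div_lt_one (by linarith : (0:ℝ) < d - 1)]
    linarith
  have hastate : ValidT a ∧ lexpT a < 1 := ⟨hav, lt_of_le_of_lt hal h1d1⟩
  have hbstate : ValidT b ∧ lexpT b < 1 := ⟨hbv, lt_of_le_of_lt hbl h1d1⟩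
  intro k
  induction k with
  | zero =>
    intro Ps Qs f hlen hG hH
    have hPs : Ps = [] := List.length_eq_zero_iff.1 (Nat.le_zero.1 hlen)
    subst hPs
    have hfa : f = a := by cases hG; rfl
    subst hfa
    rcases chain_out hd hq hH hbstate with ⟨hQs, -⟩ | hout
    · exact hQs.symm
    · exfalso
      linarith [hout.2.1, hal]
  | succ k ih =>
    intro Ps Qs f hlen hG hH
    rcases chain_snoc' hG with ⟨rfl, rfl⟩ | ⟨Ps', P, c, rfl, hGc, hP, hdP⟩
    · rcases chain_out hd hq hH hbstate with ⟨hQs, -⟩ | hout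
      · exact hQs.symm
      · exfalso
        linarith [hout.2.1, hal]
    · rcases chain_snoc' hH with ⟨rfl, rfl⟩ | ⟨Qs', Q, e, rfl, hHe, hQ, hdQ⟩
      · exfalso
        rcases chain_out hd hq hG hastate with ⟨habs, -⟩ | hout
        · simp at habs
        · linarith [hout.2.1, hbl]
      · have hc : ValidT c ∧ lexpT c < 1 := by
          rcases chain_out hd hq hGc hastate with ⟨-, rfl⟩ | hout
          · exact hastate
          · exact ⟨hout.1, lt_of_le_of_lt hout.2.2.1 hd11⟩
        have he : ValidT e ∧ lexpT e < 1 := by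
          rcases chain_out hd hq hHe hbstate with ⟨-, rfl⟩ | hout
          · exact hbstate
          · exact ⟨hout.1, lt_of_le_of_lt hout.2.2.1 hd11⟩
        have hcsup : ∀ κ ∈ c.support, κ < 1 := fun κ hκ => lt_of_le_of_lt (le_lexpT hκ) hc.2
        have hesup : ∀ κ ∈ e.support, κ < 1 := fun κ hκ => lt_of_le_of_lt (le_lexpT hκ) he.2
        have hvCP : ValidT (c + P) := add_shift_valid hc.1 hP
        have hnCP : 1 ≤ lexpT (c + P) := by
          rw [(add_shift_lexp hcsup hP).1]
          exact shift_one_le hP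
        have hvEQ : ValidT (e + Q) := add_shift_valid he.1 hQ
        have hnEQ : 1 ≤ lexpT (e + Q) := by
          rw [(add_shift_lexp hesup hQ).1]
          exact shift_one_le hQ
        have hAB : c + P = e + Q := dual_inj hd hq hvCP hnCP hvEQ hnEQ hdP hdQ
        obtain ⟨hPQ, hce⟩ := shift_sep hcsup hesup hP hQ hAB
        have hHc : Chain d q b Qs' c := by
          rw [hce]
          exact hHe
        have hlen' : Ps'.length ≤ k := by
          simp [List.length_append] at hlen
          omega
        have hPs'Qs' : Ps' = Qs' := ih Ps' Qs' c hlen' hGc hHc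
        rw [hPs'Qs', hPQ]

end Fact2

lemma Fact2.qop_pos (E : ExtSelberg) (hd : 2 < E.degree) : 0 < qop E := by
  have hπ := Real.pi_pos
  have hdeg : (0:ℝ) < E.degree := by linarith
  have h1 : (0:ℝ) < (2 * Real.pi) ^ E.degree := Real.rpow_pos_of_pos (by positivity) _
  have h2 : (0:ℝ) < E.Q ^ 2 := pow_pos E.hQ 2
  have h3 : (0:ℝ) < ∏ j, E.lam j ^ (2 * E.lam j) :=
    Finset.prod_pos (fun j _ => Real.rpow_pos_of_pos (E.hlam j) _)
  have h4 : (0:ℝ) < (2 * Real.pi * E.degree) ^ (-E.degree) :=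
    Real.rpow_pos_of_pos (by positivity) _
  rw [qop, ExtSelberg.conductor]
  positivity

/-- **Fact 2.** If `d > 2` and `G(f₀) = H(f₁)` for well-defined `G = T^♭Sₖ⋯T^♭S₁`,
`H = T^♭S'ₖ'⋯T^♭S'₁` and bases `f₀, f₁` with `0 ≤ lexp ≤ 1/d`, then `G = H` as
elements of the formal group `𝔊` (i.e. the words of shifts coincide). -/
theorem fact2 (E : ExtSelberg) (hd : 2 < E.degree)
    (f0 f1 f : TwistFun)
    (h0v : ValidT f0) (h0 : lexpT f0 ≤ 1 / E.degree)
    (h1v : ValidT f1) (h1 : lexpT f1 ≤ 1 / E.degree)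
    (Ps Qs : List TwistFun) (hPs : Ps ≠ []) (hQs : Qs ≠ [])
    (hG : Chain E.degree (qop E) f0 Ps f)
    (hH : Chain E.degree (qop E) f1 Qs f) :
    Ps = Qs :=
  Fact2.chain_unique hd (Fact2.qop_pos E hd) h0v h0 h1v h1 Ps.length Ps Qs f (le_refl _) hG hH
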